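/- Let Γ be a connected highly-regular graph, let u be any vertex, and for each i ∈ {1, …, diam(Γ)} let k_i be the number of distinct degrees occurring in the induced subgraph of Γ on D_i(u). Then I(Γ) ≥ 1 + Σ_{i=1}^{diam(Γ)} k_i. -/

import Mathlib

/-- A partition of the vertex set (encoded as a cell-assignment map `P : V → Fin m`)
witnessing that `C` is a collapsed adjacency matrix at the vertex `u`:
the cell of index `0` is exactly `{u}`, every cell is nonempty, and every vertex in
cell `j` has exactly `C i j` neighbours in cell `i`. -/
def IsWitnessingPartition {V : Type*} [Fintype V] (G : SimpleGraph V) {m : ℕ}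
    (C : Fin m → Fin m → ℕ) (u : V) (P : V → Fin m) : Prop :=
  (∀ v : V, (P v : ℕ) = 0 ↔ v = u) ∧
  (∀ t : Fin m, ∃ v : V, P v = t) ∧
  (∀ (i j : Fin m) (y : V), P y = j → {z : V | P z = i ∧ G.Adj y z}.ncard = C i j)

/-- `C` is a collapsed adjacency matrix (CAM) of size `m` for `G`: `2 ≤ m`, `m < n`
(with `m = n` allowed only when `n = 2`), and every vertex admits a witnessing partition. -/
def IsCAM {V : Type*} [Fintype V] (G : SimpleGraph V) {m : ℕ}
    (C : Fin m → Fin m → ℕ) : Prop :=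
  2 ≤ m ∧ (m < Fintype.card V ∨ (m = Fintype.card V ∧ Fintype.card V = 2)) ∧
  ∀ u : V, ∃ P : V → Fin m, IsWitnessingPartition G C u P

/-- A graph is highly-regular if it admits some CAM. -/
def IsHighlyRegular {V : Type*} [Fintype V] (G : SimpleGraph V) : Prop :=
  ∃ (m : ℕ) (C : Fin m → Fin m → ℕ), IsCAM G C

/-- The index of a highly-regular graph: the least size of a CAM. -/
noncomputable def hrIndex {V : Type*} [Fintype V] (G : SimpleGraph V) : ℕ :=
  sInf {m : ℕ | ∃ C : Fin m → Fin m → ℕ, IsCAM G C}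

/-- A connected graph is distance-regular if the numbers `|D_1(v) ∩ D_{i-1}(u)|`,
`|D_1(v) ∩ D_i(u)|`, `|D_1(v) ∩ D_{i+1}(u)|` depend only on `i = d(u,v)`. -/
def IsDistanceRegular {V : Type*} [Fintype V] (G : SimpleGraph V) : Prop :=
  G.Connected ∧ ∀ i : ℕ, 1 ≤ i → i ≤ G.diam →
    ∀ j : ℕ, j = i - 1 ∨ j = i ∨ j = i + 1 →
    ∀ u v x y : V, G.dist u v = i → G.dist x y = i →
      {w : V | G.Adj v w ∧ G.dist u w = j}.ncard =
      {w : V | G.Adj y w ∧ G.dist x w = j}.ncard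


/-- helper: step down toward `u`. -/
lemma aux_neighbor_down {V : Type*} {G : SimpleGraph V} (hconn : G.Connected) {u v : V} {n : ℕ}
    (h : G.dist u v = n + 1) : ∃ x, G.Adj v x ∧ G.dist u x = n := by
  obtain ⟨p, hp⟩ := SimpleGraph.exists_walk_of_dist_ne_zero (by rw [h]; omega)
  have hpn : ¬ p.reverse.Nil := by
    rw [SimpleGraph.Walk.nil_iff_length_eq]
    simp [hp, h]
  refine ⟨p.reverse.getVert 1, p.reverse.adj_snd hpn, le_antisymm ?_ ?_⟩
  · have hle := SimpleGraph.dist_le p.reverse.tail.reverse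
    have hlen : p.reverse.tail.length + 1 = p.reverse.length :=
      SimpleGraph.Walk.length_tail_add_one hpn
    simp only [SimpleGraph.Walk.length_reverse] at hlen ⊢
    rw [SimpleGraph.Walk.length_reverse] at hle
    change G.dist _ (p.reverse.getVert 1) ≤ _ at hle
    omega
  · have htri := hconn.dist_triangle (u := u) (v := p.reverse.getVert 1) (w := v)
    have : G.dist (p.reverse.getVert 1) v = 1 := by
      rw [SimpleGraph.dist_eq_one_iff_adj]
      exact (p.reverse.adj_snd hpn).symm
    omega

lemma aux_dist_const {V : Type*} [Fintype V] {G : SimpleGraph V} {m : ℕ}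
    {C : Fin m → Fin m → ℕ} {u : V} {P : V → Fin m}
    (hconn : G.Connected) (hP : IsWitnessingPartition G C u P) :
    ∀ n : ℕ, ∀ v w : V, G.dist u v = n → P v = P w → G.dist u w = n := by
  intro n
  induction n using Nat.strong_induction_on with
  | _ n IH =>
    intro v w hv hPvw
    match n with
    | 0 =>
      have : v = u := ((hconn.dist_eq_zero_iff (u := u) (v := v)).mp hv).symm
      have h0 : (P v : ℕ) = 0 := (hP.1 v).mpr this
      have : w = u := (hP.1 w).mp (by rw [← hPvw]; exact h0)
      rw [this, SimpleGraph.dist_self]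
    | (s+1) =>
      obtain ⟨x, hadj, hx⟩ := aux_neighbor_down hconn hv
      have hcard : {z : V | P z = P x ∧ G.Adj v z}.ncard = C (P x) (P v) :=
        hP.2.2 (P x) (P v) v rfl
      have hpos : 0 < C (P x) (P v) := by
        rw [← hcard]
        exact (Set.ncard_pos (Set.toFinite _)).mpr ⟨x, rfl, hadj⟩
      have hcardw : {z : V | P z = P x ∧ G.Adj w z}.ncard = C (P x) (P v) := by
        rw [hPvw] at hpos ⊢
        exact hP.2.2 (P x) (P w) w rfl
      obtain ⟨z, hz1, hz2⟩ := Set.nonempty_of_ncard_ne_zero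
        (s := {z : V | P z = P x ∧ G.Adj w z}) (by omega)
      have hz : G.dist u z = s := IH s (by omega) x z hx hz1.symm
      have hle : G.dist u w ≤ s + 1 := by
        have := hconn.dist_triangle (u := u) (v := z) (w := w)
        have h1 : G.dist z w = 1 := SimpleGraph.dist_eq_one_iff_adj.mpr hz2.symm
        omega
      rcases Nat.lt_or_ge (G.dist u w) (s+1) with hlt | hge
      · exfalso
        have := IH (G.dist u w) hlt w v rfl hPvw.symm
        omega
      · omega

/-- For a connected highly-regular graph, if `k i` is the number of
distinct degrees occurring in the induced subgraph on `D_i(u)`, then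
`I(Γ) ≥ 1 + Σ_{i=1}^{diam Γ} k i`. -/
theorem stmt13 {V : Type*} [Fintype V] (G : SimpleGraph V)
    (hconn : G.Connected) (hhr : IsHighlyRegular G)
    (u : V) (k : ℕ → ℕ)
    (hk : ∀ i : ℕ, k i =
      {d : ℕ | ∃ w : V, G.dist u w = i ∧
        {z : V | G.dist u z = i ∧ G.Adj w z}.ncard = d}.ncard) :
    1 + ∑ i ∈ Finset.Icc 1 G.diam, k i ≤ hrIndex G := by
  classical
  have hne : {m : ℕ | ∃ C : Fin m → Fin m → ℕ, IsCAM G C}.Nonempty := by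
    obtain ⟨m, C, h⟩ := hhr; exact ⟨m, C, h⟩
  have hmem : hrIndex G ∈ {m : ℕ | ∃ C : Fin m → Fin m → ℕ, IsCAM G C} :=
    Nat.sInf_mem hne
  obtain ⟨C, hC⟩ := hmem
  obtain ⟨h2, -, hPart⟩ := hC
  obtain ⟨P, hP⟩ := hPart u
  choose rep hrep using hP.2.1
  set dcell : Fin (hrIndex G) → ℕ := fun t => G.dist u (rep t) with hdcell
  have hdist : ∀ v : V, dcell (P v) = G.dist u v := fun v =>
    aux_dist_const hconn hP (G.dist u v) v (rep (P v)) rfl (hrep (P v)).symm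
  set Cells : ℕ → Finset (Fin (hrIndex G)) :=
    fun i => Finset.univ.filter (fun t => dcell t = i) with hCells
  -- the number of neighbours of `v` within its own sphere is determined by its cell
  have hDS : ∀ v : V, {z : V | G.dist u z = G.dist u v ∧ G.Adj v z}.ncard
      = ∑ t ∈ Cells (G.dist u v), C t (P v) := by
    intro v
    have hset : {z : V | G.dist u z = G.dist u v ∧ G.Adj v z} =
        ↑((Cells (G.dist u v)).biUnion
          (fun t => Finset.univ.filter (fun z => P z = t ∧ G.Adj v z))) := by
      ext z
      simp only [Finset.coe_biUnion, Finset.mem_coe, Finset.mem_biUnion, Finset.mem_filter,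
        Finset.mem_univ, true_and, Set.mem_setOf_eq, Set.mem_iUnion, hCells]
      constructor
      · rintro ⟨h1, h2⟩
        exact ⟨P z, by rw [hdist z]; exact h1, rfl, h2⟩
      · rintro ⟨t, ht, hPz, hAdj⟩
        refine ⟨?_, hAdj⟩
        rw [← hdist z, hPz, ht]
    have hdisj : ∀ t₁ ∈ Cells (G.dist u v), ∀ t₂ ∈ Cells (G.dist u v), t₁ ≠ t₂ →
        Disjoint (Finset.univ.filter (fun z => P z = t₁ ∧ G.Adj v z))
          (Finset.univ.filter (fun z => P z = t₂ ∧ G.Adj v z)) := by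
      intro t₁ _ t₂ _ hne12
      rw [Finset.disjoint_left]
      intro z hz1 hz2
      simp only [Finset.mem_filter] at hz1 hz2
      exact hne12 (hz1.2.1 ▸ hz2.2.1 ▸ rfl)
    rw [hset, Set.ncard_coe_finset, Finset.card_biUnion hdisj]
    refine Finset.sum_congr rfl fun t _ => ?_
    have := hP.2.2 t (P v) v rfl
    rw [← this]
    have : {z : V | P z = t ∧ G.Adj v z} =
        ↑(Finset.univ.filter (fun z => P z = t ∧ G.Adj v z)) := by
      ext z; simp
    rw [this, Set.ncard_coe_finset]
  -- each `k i` is at most the number of cells at distance `i`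
  have hki : ∀ i : ℕ, k i ≤ (Cells i).card := by
    intro i
    rw [hk i]
    have hsub : {d : ℕ | ∃ w : V, G.dist u w = i ∧
        {z : V | G.dist u z = i ∧ G.Adj w z}.ncard = d}
        ⊆ ↑((Cells i).image (fun t => ∑ t' ∈ Cells i, C t' t)) := by
      rintro d ⟨w, hw, hd⟩
      simp only [Finset.coe_image, Set.mem_image, Finset.mem_coe]
      refine ⟨P w, ?_, ?_⟩
      · simp only [hCells, Finset.mem_filter, Finset.mem_univ, true_and]
        rw [hdist w, hw]
      · rw [← hd]
        subst hw
        exact (hDS w).symm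
    calc {d : ℕ | ∃ w : V, G.dist u w = i ∧
            {z : V | G.dist u z = i ∧ G.Adj w z}.ncard = d}.ncard
        ≤ (↑((Cells i).image (fun t => ∑ t' ∈ Cells i, C t' t)) : Set ℕ).ncard :=
          Set.ncard_le_ncard hsub (Set.toFinite _)
      _ = ((Cells i).image (fun t => ∑ t' ∈ Cells i, C t' t)).card :=
          Set.ncard_coe_finset _
      _ ≤ (Cells i).card := Finset.card_image_le
  -- the cells at distinct positive distances are disjoint and avoid the cell of `u`
  have hdisjC : ∀ i₁ ∈ Finset.Icc 1 G.diam, ∀ i₂ ∈ Finset.Icc 1 G.diam, i₁ ≠ i₂ →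
      Disjoint (Cells i₁) (Cells i₂) := by
    intro i₁ _ i₂ _ hne12
    rw [Finset.disjoint_left]
    intro t ht1 ht2
    simp only [hCells, Finset.mem_filter] at ht1 ht2
    exact hne12 (ht1.2 ▸ ht2.2 ▸ rfl)
  have hu0 : dcell (P u) = 0 := by
    have h1 : (P (rep (P u)) : ℕ) = 0 := by rw [hrep (P u)]; exact (hP.1 u).mpr rfl
    have h2 : rep (P u) = u := (hP.1 _).mp h1
    simp only [hdcell, h2, SimpleGraph.dist_self]
  have hsubU : ((Finset.Icc 1 G.diam).biUnion Cells) ⊆ Finset.univ.erase (P u) := by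
    intro t ht
    rw [Finset.mem_biUnion] at ht
    obtain ⟨i, hi, hti⟩ := ht
    rw [Finset.mem_Icc] at hi
    simp only [hCells, Finset.mem_filter] at hti
    refine Finset.mem_erase.mpr ⟨?_, Finset.mem_univ t⟩
    intro h
    rw [h, hu0] at hti
    omega
  have hsum : ∑ i ∈ Finset.Icc 1 G.diam, (Cells i).card ≤ hrIndex G - 1 := by
    rw [← Finset.card_biUnion hdisjC]
    calc ((Finset.Icc 1 G.diam).biUnion Cells).card
        ≤ (Finset.univ.erase (P u)).card := Finset.card_le_card hsubU
      _ = hrIndex G - 1 := by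
          rw [Finset.card_erase_of_mem (Finset.mem_univ _), Finset.card_univ, Fintype.card_fin]
  have hfinal : ∑ i ∈ Finset.Icc 1 G.diam, k i ≤ hrIndex G - 1 :=
    le_trans (Finset.sum_le_sum fun i _ => hki i) hsum
  omega
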